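/- Let ν ⊆ λ be partitions. Then Σ_{μ : ν ⊆ μ ⊆ λ} (−1)^{|λ|−|μ|} f^{μ}_{ν(1^{|μ|−|ν|})} g^{λ}_{μ(|λ|−|μ|)} = δ_{λν}, where f^{μ}_{ν(1^k)} = Π_{i≥1} [μ'_i − μ'_{i+1} ; μ'_i − ν'_i] and g^{λ}_{μ(m)} = q^{Σ_{i≥1} binom(λ'_i − μ'_i, 2)} Π_{i≥1} [λ'_i − μ'_{i+1} ; μ'_i − μ'_{i+1}]; here δ_{λν} = 1 if λ = ν and 0 otherwise. -/

import Mathlib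

open scoped BigOperators Classical

namespace HKKOTY

/-! ### q-binomial coefficients -/

/-- Gaussian binomial coefficient `[m; k]_q`, via the q-Pascal recurrence. -/
def qbin {R : Type*} [CommRing R] (q : R) : ℕ → ℕ → R
  | _, 0 => 1
  | 0, _ + 1 => 0
  | m + 1, k + 1 => qbin q m k + q ^ (k + 1) * qbin q m (k + 1)

/-- `[m; k]_q` for integer arguments, zero unless `0 ≤ k ≤ m`. -/
def qbinZ {R : Type*} [CommRing R] (q : R) (m k : ℤ) : R :=
  if 0 ≤ m ∧ 0 ≤ k then qbin q m.toNat k.toNat else 0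

/-- `[m; k]_q` for rational arguments, zero unless both are integers with `0 ≤ k ≤ m`. -/
def qbinQ {R : Type*} [CommRing R] (q : R) (m k : ℚ) : R :=
  if m.den = 1 ∧ k.den = 1 then qbinZ q m.num k.num else 0

/-! ### Partitions as sorted lists of positive integers -/

/-- A partition, encoded as a weakly decreasing list of positive integers. -/
def IsPtn (μ : List ℕ) : Prop :=
  List.Pairwise (· ≥ ·) μ ∧ ∀ x ∈ μ, 0 < x

/-- `conjL μ i` is the `(i+1)`-st part `μ'_{i+1}` of the conjugate partition. -/
def conjL (μ : List ℕ) (i : ℕ) : ℕ := (μ.filter (fun x => i + 1 ≤ x)).length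

/-- The conjugate partition, as a list. -/
def conjList (μ : List ℕ) : List ℕ := (List.range (μ.getD 0 0)).map (fun i => conjL μ i)

/-- Content composition attached to a partition `μ`:
the letter `k ≥ 1` occurs `μ_k` times. -/
def toC (μ : List ℕ) : ℕ → ℕ := fun k => μ.getD (k - 1) 0

/-- Partwise sum of two partitions (padding with zeros). -/
def addL (α β : List ℕ) : List ℕ :=
  (List.range (max α.length β.length)).map (fun i => α.getD i 0 + β.getD i 0)

end HKKOTY



namespace HKKOTY

variable {R : Type*} [CommRing R] (q : R)

@[simp] lemma qbin_zero_right (m : ℕ) : qbin q m 0 = 1 := by cases m <;> rfl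

lemma qbin_succ_succ (m k : ℕ) :
    qbin q (m + 1) (k + 1) = qbin q m k + q ^ (k + 1) * qbin q m (k + 1) := rfl

lemma qbin_eq_zero_of_lt : ∀ {m k : ℕ}, m < k → qbin q m k = 0
  | 0, _ + 1, _ => rfl
  | m + 1, k + 1, h => by
    rw [qbin_succ_succ, qbin_eq_zero_of_lt (by omega), qbin_eq_zero_of_lt (by omega)]
    ring

@[simp] lemma qbin_self : ∀ m : ℕ, qbin q m m = 1
  | 0 => rfl
  | m + 1 => by
    rw [qbin_succ_succ, qbin_self m, qbin_eq_zero_of_lt q (by omega)]; ring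

/-- `(q)_m = ∏_{i=1}^m (1 - q^i)`. -/
def qpoch (m : ℕ) : R := ∏ i ∈ Finset.range m, (1 - q ^ (i + 1))

@[simp] lemma qpoch_zero : qpoch q 0 = 1 := rfl

lemma qpoch_succ (m : ℕ) : qpoch q (m + 1) = qpoch q m * (1 - q ^ (m + 1)) :=
  Finset.prod_range_succ _ _

lemma qbin_mul_qpoch : ∀ m k : ℕ, k ≤ m →
    qbin q m k * (qpoch q k * qpoch q (m - k)) = qpoch q m
  | m, 0, _ => by simp
  | 0, k + 1, h => by omega
  | m + 1, k + 1, h => by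
    rw [qbin_succ_succ]
    rcases eq_or_lt_of_le h with h' | h'
    · rw [(by omega : k = m), qbin_self, qbin_eq_zero_of_lt q (by omega)]
      simp
    · have hk : k ≤ m := by omega
      have hk1 : k + 1 ≤ m := by omega
      have e1 : qpoch q (k + 1) = qpoch q k * (1 - q ^ (k + 1)) := qpoch_succ q k
      have e2 : m + 1 - (k + 1) = m - k := by omega
      have e3 : qpoch q (m - k) = qpoch q (m - (k + 1)) * (1 - q ^ (m - k)) := by
        rw [(by omega : m - k = (m - (k+1)) + 1), qpoch_succ]
      have ih1 := qbin_mul_qpoch m k hk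
      have ih2 := qbin_mul_qpoch m (k + 1) hk1
      have key : q ^ (k + 1) * (1 - q ^ (m - k)) = q ^ (k + 1) - q ^ (m + 1) := by
        rw [mul_sub, mul_one, ← pow_add, (by omega : k + 1 + (m - k) = m + 1)]
      calc (qbin q m k + q ^ (k + 1) * qbin q m (k + 1)) *
            (qpoch q (k + 1) * qpoch q (m + 1 - (k + 1)))
          = qbin q m k * (qpoch q k * qpoch q (m - k)) * (1 - q ^ (k + 1))
            + q ^ (k + 1) * (1 - q ^ (m - k)) *
              (qbin q m (k + 1) * (qpoch q (k + 1) * qpoch q (m - (k + 1)))) := by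
            rw [e1, e2, e3]; ring
        _ = qpoch q m * (1 - q ^ (k + 1)) + (q ^ (k + 1) - q ^ (m + 1)) * qpoch q m := by
            rw [ih1, ih2, key]
        _ = qpoch q (m + 1) := by rw [qpoch_succ]; ring

/-- Alternating sum of a column of q-binomials. -/
lemma qbin_alt_sum (m : ℕ) :
    ∑ t ∈ Finset.range (m + 1), (-1 : R) ^ t * q ^ t.choose 2 * qbin q m t
      = if m = 0 then 1 else 0 := by
  induction m with
  | zero => simp
  | succ m _ =>
    rw [if_neg (Nat.succ_ne_zero m)]
    set G : ℕ → R := fun t => (-1 : R) ^ t * q ^ (t + 1).choose 2 * qbin q m t with hG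
    have expand : ∀ t ∈ Finset.range (m + 1),
        (-1 : R) ^ (t + 1) * q ^ (t + 1).choose 2 * qbin q (m + 1) (t + 1)
          = G (t + 1) - G t := by
      intro t _
      have c1 : ((t + 1) + 1).choose 2 = (t + 1).choose 2 + (t + 1) := by
        rw [Nat.choose_succ_succ (t + 1) 1, Nat.choose_one_right]; ring
      simp only [hG, qbin_succ_succ, c1, pow_add, pow_succ]
      ring
    rw [Finset.sum_range_succ', Finset.sum_congr rfl expand, Finset.sum_range_sub G]
    have hGm : G (m + 1) = 0 := by
      simp [hG, qbin_eq_zero_of_lt q (Nat.lt_succ_self m)]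
    have hG0 : G 0 = 1 := by simp [hG]
    rw [hGm, hG0]
    simp

/-! ### Specialization at `q = X` over `ℤ` -/

local notation "QX" => (Polynomial.X : Polynomial ℤ)

lemma qpoch_ne_zero (m : ℕ) : qpoch QX m ≠ 0 := by
  refine Finset.prod_ne_zero_iff.mpr fun i _ => ?_
  intro h
  have := congrArg (Polynomial.eval 0) h
  simp at this

lemma qbin_X_symm {m k : ℕ} (h : k ≤ m) : qbin QX m k = qbin QX m (m - k) := by
  have h' : m - k ≤ m := Nat.sub_le m k
  have e1 := qbin_mul_qpoch QX m k h
  have e2 := qbin_mul_qpoch QX m (m - k) h'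
  rw [(by omega : m - (m - k) = k)] at e2
  have hnz : qpoch QX k * qpoch QX (m - k) ≠ 0 :=
    mul_ne_zero (qpoch_ne_zero k) (qpoch_ne_zero (m - k))
  apply mul_right_cancel₀ hnz
  rw [e1, mul_comm (qpoch QX k), e2]

lemma qbin_X_trinomial {N t d : ℕ} (h : t + d ≤ N) :
    qbin QX N t * qbin QX (N - t) d = qbin QX N d * qbin QX (N - d) t := by
  have h1 : t ≤ N := by omega
  have h2 : d ≤ N - t := by omega
  have h3 : d ≤ N := by omega
  have h4 : t ≤ N - d := by omega
  have hnz : qpoch QX t * qpoch QX d * qpoch QX (N - t - d) ≠ 0 :=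
    mul_ne_zero (mul_ne_zero (qpoch_ne_zero t) (qpoch_ne_zero d)) (qpoch_ne_zero _)
  apply mul_right_cancel₀ hnz
  have e1 := qbin_mul_qpoch QX (N - t) d h2
  have e2 := qbin_mul_qpoch QX N t h1
  have e3 := qbin_mul_qpoch QX (N - d) t h4
  have e4 := qbin_mul_qpoch QX N d h3
  rw [(by omega : N - d - t = N - t - d)] at e3
  calc qbin QX N t * qbin QX (N - t) d * (qpoch QX t * qpoch QX d * qpoch QX (N - t - d))
      = qbin QX N t * (qpoch QX t * (qbin QX (N - t) d *
          (qpoch QX d * qpoch QX (N - t - d)))) := by ring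
    _ = qbin QX N t * (qpoch QX t * qpoch QX (N - t)) := by rw [e1]
    _ = qpoch QX N := e2
    _ = qbin QX N d * (qpoch QX d * qpoch QX (N - d)) := e4.symm
    _ = qbin QX N d * (qpoch QX d * (qbin QX (N - d) t *
          (qpoch QX t * qpoch QX (N - t - d)))) := by rw [e3]
    _ = qbin QX N d * qbin QX (N - d) t *
          (qpoch QX t * qpoch QX d * qpoch QX (N - t - d)) := by ring

/-- The key single-column alternating sum. -/
lemma colSum (a1 b0 c0 : ℕ) (h1 : a1 ≤ b0) (h2 : b0 ≤ c0) :
    ∑ a ∈ Finset.Icc b0 c0, (-1 : Polynomial ℤ) ^ (c0 - a) * QX ^ ((c0 - a).choose 2) *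
        (qbin QX (a - a1) (a - b0) * qbin QX (c0 - a1) (a - a1))
      = if b0 = c0 then 1 else 0 := by
  set N := c0 - a1 with hN
  set d := b0 - a1 with hd
  set n := c0 - b0 with hn
  have key : ∑ a ∈ Finset.Icc b0 c0, (-1 : Polynomial ℤ) ^ (c0 - a) *
        QX ^ ((c0 - a).choose 2) * (qbin QX (a - a1) (a - b0) * qbin QX (c0 - a1) (a - a1))
      = ∑ t ∈ Finset.range (n + 1), (-1 : Polynomial ℤ) ^ t * QX ^ t.choose 2 *
        (qbin QX N d * qbin QX n t) := by
    refine Finset.sum_nbij' (fun a => c0 - a) (fun t => c0 - t) ?_ ?_ ?_ ?_ ?_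
    · intro a ha
      simp only [Finset.mem_Icc] at ha
      simp only [Finset.mem_range]
      omega
    · intro t ht
      simp only [Finset.mem_range] at ht
      simp only [Finset.mem_Icc]
      omega
    · intro a ha
      simp only [Finset.mem_Icc] at ha
      show c0 - (c0 - a) = a
      omega
    · intro t ht
      simp only [Finset.mem_range] at ht
      show c0 - (c0 - t) = t
      omega
    · intro a ha
      simp only [Finset.mem_Icc] at ha
      set t := c0 - a with htdef
      have hta : a = c0 - t := by omega
      have htn : t ≤ n := by omega
      congr 1
      have e1 : a - a1 = N - t := by omega
      have e2 : a - b0 = n - t := by omega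
      have s1 : qbin QX (a - a1) (a - b0) = qbin QX (N - t) d := by
        rw [e1, e2, qbin_X_symm (by omega : n - t ≤ N - t), (by omega : N - t - (n - t) = d)]
      have s2 : qbin QX (c0 - a1) (a - a1) = qbin QX N t := by
        rw [e1, qbin_X_symm (by omega : N - t ≤ N), (by omega : N - (N - t) = t)]
      rw [s1, s2, mul_comm (qbin QX (N - t) d) (qbin QX N t),
        qbin_X_trinomial (by omega : t + d ≤ N), (by omega : N - d = n)]
  rw [key]
  have : ∑ t ∈ Finset.range (n + 1), (-1 : Polynomial ℤ) ^ t * QX ^ t.choose 2 *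
        (qbin QX N d * qbin QX n t)
      = qbin QX N d * ∑ t ∈ Finset.range (n + 1),
          (-1 : Polynomial ℤ) ^ t * QX ^ t.choose 2 * qbin QX n t := by
    rw [Finset.mul_sum]
    exact Finset.sum_congr rfl fun t _ => by ring
  rw [this, qbin_alt_sum]
  by_cases hbc : b0 = c0
  · have : n = 0 := by omega
    rw [if_pos hbc, this, if_pos rfl, mul_one, hN, hd, hbc]
    exact qbin_self QX (c0 - a1)
  · have : n ≠ 0 := by omega
    rw [if_neg hbc, if_neg this, mul_zero]

/-- Column sum with `qbinZ` and a lower cutoff. -/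
lemma colSumZ (a1 b0 c0 : ℕ) (hb : b0 ≤ c0) :
    ∑ x ∈ Finset.Icc (max a1 b0) c0,
        (-1 : Polynomial ℤ) ^ (c0 - x) * QX ^ ((c0 - x).choose 2) *
        (qbinZ QX ((x : ℤ) - (a1 : ℤ)) ((x : ℤ) - (b0 : ℤ)) *
          qbinZ QX ((c0 : ℤ) - (a1 : ℤ)) ((x : ℤ) - (a1 : ℤ)))
      = if b0 = c0 ∧ a1 ≤ b0 then 1 else 0 := by
  by_cases h1 : a1 ≤ b0
  · rw [Nat.max_eq_right h1]
    have conv1 : ∀ x ∈ Finset.Icc b0 c0,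
        (-1 : Polynomial ℤ) ^ (c0 - x) * QX ^ ((c0 - x).choose 2) *
        (qbinZ QX ((x : ℤ) - (a1 : ℤ)) ((x : ℤ) - (b0 : ℤ)) *
          qbinZ QX ((c0 : ℤ) - (a1 : ℤ)) ((x : ℤ) - (a1 : ℤ)))
        = (-1 : Polynomial ℤ) ^ (c0 - x) * QX ^ ((c0 - x).choose 2) *
          (qbin QX (x - a1) (x - b0) * qbin QX (c0 - a1) (x - a1)) := by
      intro x hx
      simp only [Finset.mem_Icc] at hx
      have e1 : qbinZ QX ((x : ℤ) - (a1 : ℤ)) ((x : ℤ) - (b0 : ℤ))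
          = qbin QX (x - a1) (x - b0) := by
        rw [qbinZ, if_pos ⟨by omega, by omega⟩]
        congr 1 <;> omega
      have e2 : qbinZ QX ((c0 : ℤ) - (a1 : ℤ)) ((x : ℤ) - (a1 : ℤ))
          = qbin QX (c0 - a1) (x - a1) := by
        rw [qbinZ, if_pos ⟨by omega, by omega⟩]
        congr 1 <;> omega
      rw [e1, e2]
    rw [Finset.sum_congr rfl conv1, colSum a1 b0 c0 h1 hb]
    simp [h1]
  · have allz : ∀ x ∈ Finset.Icc (max a1 b0) c0,
        (-1 : Polynomial ℤ) ^ (c0 - x) * QX ^ ((c0 - x).choose 2) *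
        (qbinZ QX ((x : ℤ) - (a1 : ℤ)) ((x : ℤ) - (b0 : ℤ)) *
          qbinZ QX ((c0 : ℤ) - (a1 : ℤ)) ((x : ℤ) - (a1 : ℤ))) = 0 := by
      intro x hx
      simp only [Finset.mem_Icc] at hx
      have e1 : qbinZ QX ((x : ℤ) - (a1 : ℤ)) ((x : ℤ) - (b0 : ℤ))
          = qbin QX (x - a1) (x - b0) := by
        rw [qbinZ, if_pos ⟨by omega, by omega⟩]
        congr 1 <;> omega
      rw [e1, qbin_eq_zero_of_lt QX (by omega : x - a1 < x - b0)]
      ring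
    rw [Finset.sum_congr rfl allz]
    simp [h1]

/-! ### The core sum over column sequences -/

/-- Extend a bounded tuple by zeros. -/
def extA {N : ℕ} {c : ℕ → ℕ} (a : ∀ i : Fin N, Fin (c i + 1)) : ℕ → ℕ :=
  fun i => if h : i < N then (a ⟨i, h⟩ : ℕ) else 0

lemma extA_le {N : ℕ} {c : ℕ → ℕ} (a : ∀ i : Fin N, Fin (c i + 1)) (i : ℕ) :
    extA a i ≤ c i := by
  unfold extA
  split
  · exact Nat.lt_succ_iff.mp (a _).isLt
  · exact Nat.zero_le _

lemma extA_cons_zero {N : ℕ} {c : ℕ → ℕ} (x : Fin (c 0 + 1))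
    (a' : ∀ i : Fin N, Fin (c (i.succ : ℕ) + 1)) :
    extA (c := c) (Fin.cons x a') 0 = (x : ℕ) := by
  unfold extA
  rw [dif_pos (Nat.succ_pos N)]
  have h0 : (⟨0, Nat.succ_pos N⟩ : Fin (N + 1)) = 0 := by ext; simp
  rw [h0]
  exact congrArg Fin.val (Fin.cons_zero (α := fun i : Fin (N+1) => Fin (c ↑i + 1)) x a')

lemma extA_cons_succ {N : ℕ} {c : ℕ → ℕ} (x : Fin (c 0 + 1))
    (a' : ∀ i : Fin N, Fin (c (i.succ : ℕ) + 1)) (i : ℕ) :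
    extA (c := c) (Fin.cons x a') (i + 1)
      = extA (c := fun j => c (j + 1)) a' i := by
  unfold extA
  by_cases h : i < N
  · rw [dif_pos (by omega : i + 1 < N + 1), dif_pos h]
    have : (⟨i + 1, by omega⟩ : Fin (N + 1)) = Fin.succ ⟨i, h⟩ := rfl
    rw [this]
    exact congrArg Fin.val (Fin.cons_succ (α := fun i : Fin (N+1) => Fin (c ↑i + 1)) x a' ⟨i, h⟩)
  · rw [dif_neg (by omega), dif_neg h]

/-- The summand of the core sum. -/
noncomputable def Fterm (N : ℕ) (b c A : ℕ → ℕ) : Polynomial ℤ :=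
  (-1 : Polynomial ℤ) ^ (∑ i ∈ Finset.range N, (c i - A i)) *
  (∏ i ∈ Finset.range N,
    qbinZ QX ((A i : ℤ) - (A (i+1) : ℤ)) ((A i : ℤ) - (b i : ℤ))) *
  (QX ^ (∑ i ∈ Finset.range N, (c i - A i).choose 2) *
   ∏ i ∈ Finset.range N,
    qbinZ QX ((c i : ℤ) - (A (i+1) : ℤ)) ((A i : ℤ) - (A (i+1) : ℤ)))

lemma Fterm_succ (N : ℕ) (b c A : ℕ → ℕ) :
    Fterm (N + 1) b c A
      = ((-1 : Polynomial ℤ) ^ (c 0 - A 0) * QX ^ ((c 0 - A 0).choose 2) *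
          (qbinZ QX ((A 0 : ℤ) - (A 1 : ℤ)) ((A 0 : ℤ) - (b 0 : ℤ)) *
           qbinZ QX ((c 0 : ℤ) - (A 1 : ℤ)) ((A 0 : ℤ) - (A 1 : ℤ)))) *
        Fterm N (fun i => b (i+1)) (fun i => c (i+1)) (fun i => A (i+1)) := by
  unfold Fterm
  rw [Finset.prod_range_succ', Finset.prod_range_succ', Finset.sum_range_succ',
    Finset.sum_range_succ', pow_add, pow_add]
  ring


lemma term_cons {N : ℕ} (b c : ℕ → ℕ)
    (x : Fin (c ↑(0 : Fin (N + 1)) + 1))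
    (a' : ∀ i : Fin N, Fin (c ↑(Fin.succ i) + 1)) :
    (if (∀ i, extA (Fin.cons (α := fun i : Fin (N+1) => Fin (c ↑i + 1)) x a') (i+1)
            ≤ extA (Fin.cons (α := fun i : Fin (N+1) => Fin (c ↑i + 1)) x a') i)
        ∧ (∀ i, b i ≤ extA (Fin.cons (α := fun i : Fin (N+1) => Fin (c ↑i + 1)) x a') i)
      then Fterm (N+1) b c (extA (Fin.cons (α := fun i : Fin (N+1) => Fin (c ↑i + 1)) x a'))
      else 0)
    = (if (extA (c := fun j => c (j+1)) a' 0 ≤ (x : ℕ) ∧ b 0 ≤ (x : ℕ))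
          ∧ ((∀ i, extA (c := fun j => c (j+1)) a' (i+1) ≤ extA (c := fun j => c (j+1)) a' i)
            ∧ (∀ i, b (i+1) ≤ extA (c := fun j => c (j+1)) a' i))
      then ((-1 : Polynomial ℤ) ^ (c 0 - (x : ℕ)) * QX ^ ((c 0 - (x : ℕ)).choose 2) *
          (qbinZ QX (((x : ℕ) : ℤ) - (extA (c := fun j => c (j+1)) a' 0 : ℤ))
              (((x : ℕ) : ℤ) - (b 0 : ℤ)) *
           qbinZ QX ((c 0 : ℤ) - (extA (c := fun j => c (j+1)) a' 0 : ℤ))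
              (((x : ℕ) : ℤ) - (extA (c := fun j => c (j+1)) a' 0 : ℤ)))) *
        Fterm N (fun i => b (i+1)) (fun i => c (i+1)) (extA (c := fun j => c (j+1)) a')
      else 0) := by
  set A := extA (Fin.cons (α := fun i : Fin (N+1) => Fin (c ↑i + 1)) x a') with hA
  set A' := extA (c := fun j => c (j+1)) a' with hA'
  have h0 : A 0 = (x : ℕ) := by
    rw [hA]
    unfold extA
    rw [dif_pos (Nat.succ_pos N)]
    have h0' : (⟨0, Nat.succ_pos N⟩ : Fin (N + 1)) = 0 := by ext; simp
    rw [h0', Fin.cons_zero]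
  have hs : ∀ i, A (i + 1) = A' i := by
    intro i
    rw [hA, hA']
    unfold extA
    by_cases h : i < N
    · rw [dif_pos (by omega : i + 1 < N + 1), dif_pos h]
      have : (⟨i + 1, by omega⟩ : Fin (N + 1)) = Fin.succ ⟨i, h⟩ := rfl
      rw [this, Fin.cons_succ]
    · rw [dif_neg (by omega), dif_neg h]
  have hiff : ((∀ i, A (i+1) ≤ A i) ∧ (∀ i, b i ≤ A i))
      ↔ ((A' 0 ≤ (x : ℕ) ∧ b 0 ≤ (x : ℕ))
          ∧ ((∀ i, A' (i+1) ≤ A' i) ∧ (∀ i, b (i+1) ≤ A' i))) := by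
    constructor
    · rintro ⟨hd, hm⟩
      refine ⟨⟨?_, ?_⟩, ⟨fun i => ?_, fun i => ?_⟩⟩
      · rw [← hs 0, ← h0]; exact hd 0
      · rw [← h0]; exact hm 0
      · rw [← hs, ← hs]; exact hd (i+1)
      · rw [← hs]; exact hm (i+1)
    · rintro ⟨⟨h1, h2⟩, ⟨h3, h4⟩⟩
      constructor
      · intro i
        cases i with
        | zero => rw [hs 0, h0]; exact h1
        | succ n => rw [hs (n+1), hs n]; exact h3 n
      · intro i
        cases i with
        | zero => rw [h0]; exact h2
        | succ n => rw [hs n]; exact h4 n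
  rw [if_congr hiff rfl rfl]
  congr 1
  rw [Fterm_succ]
  have htail : (fun i => A (i + 1)) = A' := funext hs
  rw [h0, hs 0, htail]

/-- The core orthogonality identity, by induction on the number of columns. -/
lemma coreSum : ∀ (N : ℕ) (b c : ℕ → ℕ), (∀ i, c (i+1) ≤ c i) → (∀ i, N ≤ i → c i = 0) →
    (∀ i, b i ≤ c i) → (∀ i, N ≤ i → b i = 0) →
    (∑ a : ∀ i : Fin N, Fin (c i + 1),
        if (∀ i, extA a (i+1) ≤ extA a i) ∧ (∀ i, b i ≤ extA a i)
        then Fterm N b c (extA a) else 0)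
      = if ∀ i, b i = c i then 1 else 0
  | 0, b, c, hc, hcN, hb, hbN => by
    have hb0 : ∀ i, b i = 0 := fun i => hbN i (Nat.zero_le i)
    have hc0 : ∀ i, c i = 0 := fun i => hcN i (Nat.zero_le i)
    have hext : ∀ (a : ∀ i : Fin 0, Fin (c i + 1)) (i : ℕ), extA a i = 0 := by
      intro a i
      unfold extA
      rw [dif_neg (Nat.not_lt_zero i)]
    rw [Fintype.sum_unique]
    rw [if_pos ⟨fun i => by rw [hext, hext], fun i => by rw [hext, hb0]⟩]
    rw [if_pos (fun i => by rw [hb0, hc0])]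
    unfold Fterm
    simp
  | N + 1, b, c, hc, hcN, hb, hbN => by
    have IH := coreSum N (fun i => b (i+1)) (fun i => c (i+1))
        (fun i => hc (i+1)) (fun i hi => hcN (i+1) (by omega))
        (fun i => hb (i+1)) (fun i hi => hbN (i+1) (by omega))
    rw [← Equiv.sum_comp (Fin.consEquiv (fun i : Fin (N+1) => Fin (c ↑i + 1))),
      Fintype.sum_prod_type]
    refine Eq.trans (Finset.sum_congr rfl fun x _ =>
      Finset.sum_congr rfl fun a' _ => term_cons b c x a') ?_
    rw [Finset.sum_comm]
    have inner : ∀ a' : ∀ i : Fin N, Fin (c ↑(Fin.succ i) + 1),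
        (∑ x : Fin (c ↑(0 : Fin (N + 1)) + 1),
          (if (extA (c := fun j => c (j+1)) a' 0 ≤ (x : ℕ) ∧ b 0 ≤ (x : ℕ))
              ∧ ((∀ i, extA (c := fun j => c (j+1)) a' (i+1) ≤ extA (c := fun j => c (j+1)) a' i)
                ∧ (∀ i, b (i+1) ≤ extA (c := fun j => c (j+1)) a' i))
          then ((-1 : Polynomial ℤ) ^ (c 0 - (x : ℕ)) * QX ^ ((c 0 - (x : ℕ)).choose 2) *
              (qbinZ QX (((x : ℕ) : ℤ) - (extA (c := fun j => c (j+1)) a' 0 : ℤ))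
                  (((x : ℕ) : ℤ) - (b 0 : ℤ)) *
               qbinZ QX ((c 0 : ℤ) - (extA (c := fun j => c (j+1)) a' 0 : ℤ))
                  (((x : ℕ) : ℤ) - (extA (c := fun j => c (j+1)) a' 0 : ℤ)))) *
            Fterm N (fun i => b (i+1)) (fun i => c (i+1)) (extA (c := fun j => c (j+1)) a')
          else 0))
        = if ((∀ i, extA (c := fun j => c (j+1)) a' (i+1) ≤ extA (c := fun j => c (j+1)) a' i)
                ∧ (∀ i, b (i+1) ≤ extA (c := fun j => c (j+1)) a' i))
          then (if b 0 = c 0 ∧ extA (c := fun j => c (j+1)) a' 0 ≤ b 0 then 1 else 0) *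
            Fterm N (fun i => b (i+1)) (fun i => c (i+1)) (extA (c := fun j => c (j+1)) a')
          else 0 := by
      intro a'
      set A' := extA (c := fun j => c (j+1)) a' with hA'
      by_cases hR : (∀ i, A' (i+1) ≤ A' i) ∧ (∀ i, b (i+1) ≤ A' i)
      · rw [if_pos hR]
        refine Eq.trans (Finset.sum_congr rfl fun x _ =>
          if_congr (and_iff_left hR) rfl rfl) ?_
        have step : ∀ x : Fin (c ↑(0 : Fin (N + 1)) + 1),
            (if A' 0 ≤ (x : ℕ) ∧ b 0 ≤ (x : ℕ)
            then ((-1 : Polynomial ℤ) ^ (c 0 - (x : ℕ)) * QX ^ ((c 0 - (x : ℕ)).choose 2) *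
                (qbinZ QX (((x : ℕ) : ℤ) - (A' 0 : ℤ)) (((x : ℕ) : ℤ) - (b 0 : ℤ)) *
                 qbinZ QX ((c 0 : ℤ) - (A' 0 : ℤ)) (((x : ℕ) : ℤ) - (A' 0 : ℤ)))) *
              Fterm N (fun i => b (i+1)) (fun i => c (i+1)) A'
            else 0)
            = (fun n : ℕ =>
                (if A' 0 ≤ n ∧ b 0 ≤ n
                then ((-1 : Polynomial ℤ) ^ (c 0 - n) * QX ^ ((c 0 - n).choose 2) *
                    (qbinZ QX ((n : ℤ) - (A' 0 : ℤ)) ((n : ℤ) - (b 0 : ℤ)) *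
                     qbinZ QX ((c 0 : ℤ) - (A' 0 : ℤ)) ((n : ℤ) - (A' 0 : ℤ)))) *
                  Fterm N (fun i => b (i+1)) (fun i => c (i+1)) A'
                else 0)) ((x : ℕ)) := fun x => rfl
        refine Eq.trans (Finset.sum_congr rfl fun x _ => step x) ?_
        refine Eq.trans (Fin.sum_univ_eq_sum_range (fun n : ℕ =>
          (if A' 0 ≤ n ∧ b 0 ≤ n
          then ((-1 : Polynomial ℤ) ^ (c 0 - n) * QX ^ ((c 0 - n).choose 2) *
              (qbinZ QX ((n : ℤ) - (A' 0 : ℤ)) ((n : ℤ) - (b 0 : ℤ)) *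
               qbinZ QX ((c 0 : ℤ) - (A' 0 : ℤ)) ((n : ℤ) - (A' 0 : ℤ)))) *
            Fterm N (fun i => b (i+1)) (fun i => c (i+1)) A'
          else 0)) (c ↑(0 : Fin (N + 1)) + 1)) ?_
        have hval0 : (↑(0 : Fin (N + 1)) : ℕ) = 0 := Fin.val_zero _
        rw [hval0]
        rw [← Finset.sum_filter]
        have hfil : (Finset.range (c 0 + 1)).filter (fun n => A' 0 ≤ n ∧ b 0 ≤ n)
            = Finset.Icc (max (A' 0) (b 0)) (c 0) := by
          ext n
          simp only [Finset.mem_filter, Finset.mem_range, Finset.mem_Icc]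
          omega
        rw [hfil, ← Finset.sum_mul, colSumZ (A' 0) (b 0) (c 0) (hb 0)]
      · rw [if_neg hR]
        refine Eq.trans (Finset.sum_congr rfl fun x _ =>
          if_neg (fun h => hR h.2)) Finset.sum_const_zero
    rw [Finset.sum_congr rfl fun a' _ => inner a']
    by_cases hbc : b 0 = c 0
    · have hA0b : ∀ a' : ∀ i : Fin N, Fin (c ↑(Fin.succ i) + 1),
          extA (c := fun j => c (j+1)) a' 0 ≤ b 0 := by
        intro a'
        calc extA (c := fun j => c (j+1)) a' 0 ≤ c (0 + 1) :=
              extA_le (c := fun j => c (j+1)) a' 0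
          _ ≤ c 0 := hc 0
          _ = b 0 := hbc.symm
      have step2 : ∀ a' : ∀ i : Fin N, Fin (c ↑(Fin.succ i) + 1),
          (if ((∀ i, extA (c := fun j => c (j+1)) a' (i+1) ≤ extA (c := fun j => c (j+1)) a' i)
                ∧ (∀ i, b (i+1) ≤ extA (c := fun j => c (j+1)) a' i))
          then (if b 0 = c 0 ∧ extA (c := fun j => c (j+1)) a' 0 ≤ b 0 then 1 else 0) *
            Fterm N (fun i => b (i+1)) (fun i => c (i+1)) (extA (c := fun j => c (j+1)) a')
          else 0)
          = (if ((∀ i, extA (c := fun j => c (j+1)) a' (i+1) ≤ extA (c := fun j => c (j+1)) a' i)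
                ∧ (∀ i, b (i+1) ≤ extA (c := fun j => c (j+1)) a' i))
          then Fterm N (fun i => b (i+1)) (fun i => c (i+1)) (extA (c := fun j => c (j+1)) a')
          else 0) := by
        intro a'
        by_cases hR : (∀ i, extA (c := fun j => c (j+1)) a' (i+1) ≤ extA (c := fun j => c (j+1)) a' i)
            ∧ (∀ i, b (i+1) ≤ extA (c := fun j => c (j+1)) a' i)
        · rw [if_pos hR, if_pos hR, if_pos ⟨hbc, hA0b a'⟩, one_mul]
        · rw [if_neg hR, if_neg hR]
      rw [Finset.sum_congr rfl fun a' _ => step2 a']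
      have hiff2 : (∀ i, b i = c i) ↔ (∀ i, b (i+1) = c (i+1)) := by
        constructor
        · exact fun h i => h (i+1)
        · intro h i
          cases i with
          | zero => exact hbc
          | succ n => exact h n
      rw [if_congr hiff2 rfl rfl]
      exact IH
    · have step3 : ∀ a' : ∀ i : Fin N, Fin (c ↑(Fin.succ i) + 1),
          (if ((∀ i, extA (c := fun j => c (j+1)) a' (i+1) ≤ extA (c := fun j => c (j+1)) a' i)
                ∧ (∀ i, b (i+1) ≤ extA (c := fun j => c (j+1)) a' i))
          then (if b 0 = c 0 ∧ extA (c := fun j => c (j+1)) a' 0 ≤ b 0 then 1 else 0) *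
            Fterm N (fun i => b (i+1)) (fun i => c (i+1)) (extA (c := fun j => c (j+1)) a')
          else 0) = 0 := by
        intro a'
        by_cases hR : (∀ i, extA (c := fun j => c (j+1)) a' (i+1) ≤ extA (c := fun j => c (j+1)) a' i)
            ∧ (∀ i, b (i+1) ≤ extA (c := fun j => c (j+1)) a' i)
        · rw [if_pos hR, if_neg (fun h => hbc h.1), zero_mul]
        · rw [if_neg hR]
      rw [Finset.sum_congr rfl fun a' _ => step3 a', Finset.sum_const_zero,
        if_neg (fun h => hbc (h 0))]

/-! ### Partition lemmas -/

lemma getD_anti {μ : List ℕ} (h : List.Pairwise (· ≥ ·) μ) {i j : ℕ} (hij : i ≤ j) :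
    μ.getD j 0 ≤ μ.getD i 0 := by
  by_cases hj : j < μ.length
  · have hi : i < μ.length := lt_of_le_of_lt hij hj
    rw [List.getD_eq_getElem μ 0 hj, List.getD_eq_getElem μ 0 hi]
    rcases eq_or_lt_of_le hij with rfl | hij'
    · exact le_refl _
    · exact (List.pairwise_iff_getElem.mp h) i j hi hj hij'
  · rw [List.getD_eq_default μ 0 (by omega)]
    exact Nat.zero_le _

lemma head_bound {μ : List ℕ} (h : List.Pairwise (· ≥ ·) μ) (x : ℕ) (hx : x ∈ μ) :
    x ≤ μ.getD 0 0 := by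
  obtain ⟨j, hj, rfl⟩ := List.getElem_of_mem hx
  rw [← List.getD_eq_getElem μ 0 hj]
  exact getD_anti h (Nat.zero_le j)

/-- The fundamental Galois characterization of the conjugate partition. -/
lemma conjL_char {μ : List ℕ} (h : IsPtn μ) (i j : ℕ) :
    i + 1 ≤ μ.getD j 0 ↔ j < conjL μ i := by
  induction μ generalizing j with
  | nil => simp [conjL]
  | cons x xs ih =>
    obtain ⟨hs, hp⟩ := h
    rw [List.pairwise_cons] at hs
    have ihs := ih ⟨hs.2, fun y hy => hp y (List.mem_cons_of_mem x hy)⟩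
    by_cases hx : i + 1 ≤ x
    · have hc : conjL (x :: xs) i = conjL xs i + 1 := by
        simp [conjL, List.filter_cons, (by omega : i < x)]
      cases j with
      | zero => simp [hc, hx]
      | succ j' =>
        have : (x :: xs).getD (j' + 1) 0 = xs.getD j' 0 := rfl
        rw [this, hc, ihs j']
        omega
    · have hc : conjL (x :: xs) i = 0 := by
        have : ∀ y ∈ x :: xs, ¬ (i + 1 ≤ y) := by
          intro y hy
          rcases List.mem_cons.mp hy with rfl | hy'
          · exact hx
          · have := hs.1 y hy'
            omega
        simp only [conjL, List.length_eq_zero_iff]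
        rw [List.filter_eq_nil_iff]
        intro y hy
        simpa using this y hy
      rw [hc]
      simp only [Nat.not_lt_zero, iff_false]
      cases j with
      | zero => simpa using hx
      | succ j' =>
        have : (x :: xs).getD (j' + 1) 0 = xs.getD j' 0 := rfl
        rw [this]
        intro hcon
        have h1 : xs.getD j' 0 ≤ x := by
          by_cases hj : j' < xs.length
          · rw [List.getD_eq_getElem xs 0 hj]
            exact hs.1 _ (List.getElem_mem hj)
          · rw [List.getD_eq_default xs 0 (by omega)]
            exact Nat.zero_le x
        omega

lemma conjL_anti {μ : List ℕ} (h : IsPtn μ) (i : ℕ) : conjL μ (i + 1) ≤ conjL μ i := by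
  by_contra hcon
  push_neg at hcon
  have h1 := (conjL_char h (i + 1) (conjL μ i)).mpr hcon
  have h2 : ¬ (i + 1 ≤ μ.getD (conjL μ i) 0) := fun hh =>
    absurd ((conjL_char h i (conjL μ i)).mp hh) (lt_irrefl _)
  omega

lemma conjL_eq_zero {μ : List ℕ} {i : ℕ} (h : ∀ x ∈ μ, x ≤ i) : conjL μ i = 0 := by
  simp only [conjL, List.length_eq_zero_iff]
  rw [List.filter_eq_nil_iff]
  intro y hy
  have := h y hy
  simp
  omega

lemma dominance_iff {ν μ : List ℕ} (hν : IsPtn ν) (hμ : IsPtn μ) :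
    (∀ j, ν.getD j 0 ≤ μ.getD j 0) ↔ (∀ i, conjL ν i ≤ conjL μ i) := by
  constructor
  · intro h i
    by_contra hcon
    push_neg at hcon
    have h1 := (conjL_char hν i (conjL μ i)).mpr hcon
    have h2 : ¬ (i + 1 ≤ μ.getD (conjL μ i) 0) := fun hh =>
      absurd ((conjL_char hμ i (conjL μ i)).mp hh) (lt_irrefl _)
    have := h (conjL μ i)
    omega
  · intro h j
    by_cases h0 : ν.getD j 0 = 0
    · omega
    · have h1 : (ν.getD j 0 - 1) + 1 ≤ ν.getD j 0 := by omega
      have h2 := (conjL_char hν (ν.getD j 0 - 1) j).mp h1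
      have h3 : j < conjL μ (ν.getD j 0 - 1) := lt_of_lt_of_le h2 (h _)
      have h4 := (conjL_char hμ (ν.getD j 0 - 1) j).mpr h3
      omega

lemma getD_pos_iff {μ : List ℕ} (hμ : IsPtn μ) (j : ℕ) :
    0 < μ.getD j 0 ↔ j < μ.length := by
  constructor
  · intro h
    by_contra hj
    rw [List.getD_eq_default μ 0 (by omega)] at h
    omega
  · intro h
    rw [List.getD_eq_getElem μ 0 h]
    exact hμ.2 _ (List.getElem_mem h)

lemma ptn_ext {μ ρ : List ℕ} (hμ : IsPtn μ) (hρ : IsPtn ρ)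
    (h : ∀ j, μ.getD j 0 = ρ.getD j 0) : μ = ρ := by
  have hlen : μ.length = ρ.length := by
    by_contra hl
    rcases Nat.lt_or_ge μ.length ρ.length with hlt | hge
    · have := (getD_pos_iff hρ μ.length).mpr hlt
      rw [← h, List.getD_eq_default μ 0 (le_refl _)] at this
      omega
    · have hlt : ρ.length < μ.length := by omega
      have := (getD_pos_iff hμ ρ.length).mpr hlt
      rw [h, List.getD_eq_default ρ 0 (le_refl _)] at this
      omega
  refine List.ext_getElem hlen ?_
  intro n h1 h2
  rw [← List.getD_eq_getElem μ 0 h1, ← List.getD_eq_getElem ρ 0 h2]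
  exact h n

lemma ptn_ext_conj {μ ρ : List ℕ} (hμ : IsPtn μ) (hρ : IsPtn ρ)
    (h : ∀ i, conjL μ i = conjL ρ i) : μ = ρ := by
  refine ptn_ext hμ hρ fun j => ?_
  have key : ∀ i, i + 1 ≤ μ.getD j 0 ↔ i + 1 ≤ ρ.getD j 0 := fun i => by
    rw [conjL_char hμ i j, conjL_char hρ i j, h i]
  have k1 := key (μ.getD j 0 - 1)
  have k2 := key (ρ.getD j 0 - 1)
  omega

lemma sum_eq_sum_conjL {μ : List ℕ} {n : ℕ} (h : ∀ x ∈ μ, x ≤ n) :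
    μ.sum = ∑ i ∈ Finset.range n, conjL μ i := by
  induction μ with
  | nil => simp [conjL]
  | cons x xs ih =>
    have hx : x ≤ n := h x List.mem_cons_self
    have hxs := ih (fun y hy => h y (List.mem_cons_of_mem x hy))
    have hstep : ∀ i, conjL (x :: xs) i = conjL xs i + (if i + 1 ≤ x then 1 else 0) := by
      intro i
      by_cases hxi : i < x <;> simp [conjL, List.filter_cons, hxi]
    have hcount : ∑ i ∈ Finset.range n, (if i + 1 ≤ x then 1 else 0) = x := by
      rw [← Finset.sum_filter]
      have : (Finset.range n).filter (fun i => i + 1 ≤ x) = Finset.range x := by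
        ext i
        simp only [Finset.mem_filter, Finset.mem_range]
        omega
      rw [this]; simp
    rw [List.sum_cons, hxs, Finset.sum_congr rfl (fun i _ => hstep i),
      Finset.sum_add_distrib, hcount]
    ring
  
/-! ### Un-conjugation -/

/-- The partition whose conjugate is the (eventually zero, antitone) sequence `A`. -/
def unconjL (n : ℕ) (A : ℕ → ℕ) : List ℕ :=
  (List.range (A 0)).map (fun j => ((Finset.range n).filter (fun i => j < A i)).card)

section Unconj

variable {n : ℕ} {A : ℕ → ℕ} (hA : ∀ i, A (i + 1) ≤ A i) (hA0 : ∀ i, n ≤ i → A i = 0)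

private def Cc (n : ℕ) (A : ℕ → ℕ) (j : ℕ) : ℕ :=
  ((Finset.range n).filter (fun i => j < A i)).card

include hA in
lemma Achar (i j : ℕ) (hA0 : ∀ i, n ≤ i → A i = 0) : j < A i ↔ i < Cc n A j := by
  have hAnti : Antitone A := antitone_nat_of_succ_le hA
  have down : ∀ i1 i2 : ℕ, i1 ≤ i2 → i2 ∈ (Finset.range n).filter (fun i => j < A i)
      → i1 ∈ (Finset.range n).filter (fun i => j < A i) := by
    intro i1 i2 h12 h2
    simp only [Finset.mem_filter, Finset.mem_range] at h2 ⊢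
    exact ⟨by omega, lt_of_lt_of_le h2.2 (hAnti h12)⟩
  constructor
  · intro h
    have hin : i < n := by
      by_contra hc
      rw [hA0 i (by omega)] at h
      omega
    have hsub : Finset.range (i + 1) ⊆ (Finset.range n).filter (fun i => j < A i) := by
      intro i1 h1
      simp only [Finset.mem_range] at h1
      exact down i1 i (by omega) (by
        simp only [Finset.mem_filter, Finset.mem_range]
        exact ⟨hin, h⟩)
    have := Finset.card_le_card hsub
    simpa [Cc] using this
  · intro h
    by_contra hc
    have hsub : (Finset.range n).filter (fun i => j < A i) ⊆ Finset.range i := by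
      intro i2 h2
      simp only [Finset.mem_range]
      by_contra hc2
      have := down i i2 (by omega) h2
      simp only [Finset.mem_filter, Finset.mem_range] at this
      exact hc this.2
    have := Finset.card_le_card hsub
    simp only [Finset.card_range] at this
    have : Cc n A j ≤ i := this
    omega

lemma Cc_anti (j : ℕ) : Cc n A (j + 1) ≤ Cc n A j := by
  apply Finset.card_le_card
  intro x hx
  simp only [Finset.mem_filter, Finset.mem_range] at hx ⊢
  exact ⟨hx.1, by omega⟩

lemma unconjL_length : (unconjL n A).length = A 0 := by simp [unconjL]

lemma unconjL_getD (j : ℕ) :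
    (unconjL n A).getD j 0 = if j < A 0 then Cc n A j else 0 := by
  by_cases hj : j < A 0
  · rw [if_pos hj, List.getD_eq_getElem _ 0 (by rw [unconjL_length]; exact hj)]
    simp [unconjL, Cc]
  · rw [if_neg hj, List.getD_eq_default _ 0 (by rw [unconjL_length]; omega)]

include hA hA0 in
lemma unconjL_isPtn : IsPtn (unconjL n A) := by
  have hAnti : Antitone A := antitone_nat_of_succ_le hA
  constructor
  · rw [List.pairwise_iff_getElem]
    intro j1 j2 h1 h2 h12
    simp only [unconjL, List.getElem_map, List.getElem_range]
    have hC : Antitone (Cc n A) := antitone_nat_of_succ_le Cc_anti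
    exact hC (le_of_lt h12)
  · intro x hx
    simp only [unconjL, List.mem_map, List.mem_range] at hx
    obtain ⟨j, hj, rfl⟩ := hx
    have hn : 0 < n := by
      by_contra hc
      rw [hA0 0 (by omega)] at hj
      omega
    apply Finset.card_pos.mpr
    exact ⟨0, by
      simp only [Finset.mem_filter, Finset.mem_range]
      exact ⟨hn, hj⟩⟩

include hA hA0 in
lemma conjL_unconjL (i : ℕ) : conjL (unconjL n A) i = A i := by
  have hAnti : Antitone A := antitone_nat_of_succ_le hA
  have hU : IsPtn (unconjL n A) := unconjL_isPtn hA hA0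
  have key : ∀ j, (j < conjL (unconjL n A) i ↔ j < A i) := by
    intro j
    rw [← conjL_char hU i j, unconjL_getD]
    by_cases hj : j < A 0
    · rw [if_pos hj]
      have := Achar hA i j hA0
      omega
    · rw [if_neg hj]
      have : A i ≤ A 0 := hAnti (Nat.zero_le i)
      omega
  have k1 := key (conjL (unconjL n A) i)
  have k2 := key (A i)
  omega

end Unconj

end HKKOTY

namespace HKKOTY

open Finset

/-- The Pieri coefficient `f^{μ}_{ν(1^k)} = ∏_i [μ'_i - μ'_{i+1}; μ'_i - ν'_i]`
(for multiplication of a Hall–Littlewood function by `e_k`). -/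
noncomputable def fPieriP (bound : ℕ) (μ ν : List ℕ) : Polynomial ℤ :=
  ∏ i ∈ range bound,
    qbinZ (Polynomial.X : Polynomial ℤ)
      ((conjL μ i : ℤ) - (conjL μ (i + 1) : ℤ))
      ((conjL μ i : ℤ) - (conjL ν i : ℤ))

/-- The Pieri coefficient
`g^{λ}_{μ(m)} = q^{∑_i binom(λ'_i - μ'_i, 2)} ∏_i [λ'_i - μ'_{i+1}; μ'_i - μ'_{i+1}]`
(for multiplication of a Hall–Littlewood function by `h_m`). -/
noncomputable def gPieriP (bound : ℕ) (lam μ : List ℕ) : Polynomial ℤ :=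
  Polynomial.X ^ (∑ i ∈ range bound, (conjL lam i - conjL μ i).choose 2) *
    ∏ i ∈ range bound,
      qbinZ (Polynomial.X : Polynomial ℤ)
        ((conjL lam i : ℤ) - (conjL μ (i + 1) : ℤ))
        ((conjL μ i : ℤ) - (conjL μ (i + 1) : ℤ))

/-- **Orthogonality of the `e`- and `h`-Pieri coefficients.**
For partitions `ν ⊆ λ`,
`∑_{ν ⊆ μ ⊆ λ} (-1)^{|λ|-|μ|} f^{μ}_{ν(1^{|μ|-|ν|})} g^{λ}_{μ(|λ|-|μ|)} = δ_{λν}`. -/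
theorem pieri_orthogonality (lam ν : List ℕ) (hlam : IsPtn lam) (hν : IsPtn ν)
    (hsub : ∀ i, ν.getD i 0 ≤ lam.getD i 0) :
    (∑ᶠ μ : {μ : List ℕ // IsPtn μ ∧ (∀ i, ν.getD i 0 ≤ μ.getD i 0) ∧
        (∀ i, μ.getD i 0 ≤ lam.getD i 0)},
      ((-1 : Polynomial ℤ) ^ (lam.sum - μ.1.sum)) *
        fPieriP (lam.getD 0 0) μ.1 ν * gPieriP (lam.getD 0 0) lam μ.1)
    = if lam = ν then 1 else 0 := by

  classical
  have hlam_bd : ∀ x ∈ lam, x ≤ lam.getD 0 0 := fun x hx => head_bound hlam.1 x hx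
  have hν_bd : ∀ x ∈ ν, x ≤ lam.getD 0 0 := fun x hx =>
    le_trans (head_bound hν.1 x hx) (hsub 0)
  have hcanti : ∀ i, conjL lam (i + 1) ≤ conjL lam i := conjL_anti hlam
  have hcN : ∀ i, lam.getD 0 0 ≤ i → conjL lam i = 0 := fun i hi =>
    conjL_eq_zero (fun x hx => le_trans (hlam_bd x hx) hi)
  have hb_le_c : ∀ i, conjL ν i ≤ conjL lam i := (dominance_iff hν hlam).mp hsub
  have hbN : ∀ i, lam.getD 0 0 ≤ i → conjL ν i = 0 := fun i hi =>
    conjL_eq_zero (fun x hx => le_trans (hν_bd x hx) hi)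
  -- finiteness of the index type
  have hFinite : Finite {μ : List ℕ // IsPtn μ ∧ (∀ i, ν.getD i 0 ≤ μ.getD i 0) ∧
      (∀ i, μ.getD i 0 ≤ lam.getD i 0)} := by
    apply Finite.of_injective (fun μ : {μ : List ℕ // IsPtn μ ∧
        (∀ i, ν.getD i 0 ≤ μ.getD i 0) ∧ (∀ i, μ.getD i 0 ≤ lam.getD i 0)} =>
      (fun i : Fin lam.length => (⟨μ.1.getD ↑i 0,
        Nat.lt_succ_of_le (le_trans (μ.2.2.2 ↑i) (getD_anti hlam.1 (Nat.zero_le ↑i)))⟩ :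
        Fin (lam.getD 0 0 + 1))))
    intro μ1 μ2 hf
    apply Subtype.ext
    apply ptn_ext μ1.2.1 μ2.2.1
    intro j
    by_cases hj : j < lam.length
    · exact congrArg Fin.val (congrFun hf ⟨j, hj⟩)
    · have z1 : lam.getD j 0 = 0 := List.getD_eq_default _ _ (by omega)
      have z2 := μ1.2.2.2 j
      have z3 := μ2.2.2.2 j
      omega
  letI : Fintype {μ : List ℕ // IsPtn μ ∧ (∀ i, ν.getD i 0 ≤ μ.getD i 0) ∧
      (∀ i, μ.getD i 0 ≤ lam.getD i 0)} := Fintype.ofFinite _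
  rw [finsum_eq_sum_of_fintype]
  -- per-μ facts
  have hμbd : ∀ μ : {μ : List ℕ // IsPtn μ ∧ (∀ i, ν.getD i 0 ≤ μ.getD i 0) ∧
      (∀ i, μ.getD i 0 ≤ lam.getD i 0)}, ∀ x ∈ μ.1, x ≤ lam.getD 0 0 := fun μ x hx =>
    le_trans (head_bound μ.2.1.1 x hx) (μ.2.2.2 0)
  have hμc : ∀ μ : {μ : List ℕ // IsPtn μ ∧ (∀ i, ν.getD i 0 ≤ μ.getD i 0) ∧
      (∀ i, μ.getD i 0 ≤ lam.getD i 0)}, ∀ i, conjL μ.1 i ≤ conjL lam i := fun μ =>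
    (dominance_iff μ.2.1 hlam).mp μ.2.2.2
  have hbμ : ∀ μ : {μ : List ℕ // IsPtn μ ∧ (∀ i, ν.getD i 0 ≤ μ.getD i 0) ∧
      (∀ i, μ.getD i 0 ≤ lam.getD i 0)}, ∀ i, conjL ν i ≤ conjL μ.1 i := fun μ =>
    (dominance_iff hν μ.2.1).mp μ.2.2.1
  have hμN : ∀ μ : {μ : List ℕ // IsPtn μ ∧ (∀ i, ν.getD i 0 ≤ μ.getD i 0) ∧
      (∀ i, μ.getD i 0 ≤ lam.getD i 0)}, ∀ i, lam.getD 0 0 ≤ i → conjL μ.1 i = 0 :=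
    fun μ i hi => conjL_eq_zero (fun x hx => le_trans (hμbd μ x hx) hi)
  -- the bijection
  let toA : {μ : List ℕ // IsPtn μ ∧ (∀ i, ν.getD i 0 ≤ μ.getD i 0) ∧
      (∀ i, μ.getD i 0 ≤ lam.getD i 0)} → (∀ i : Fin (lam.getD 0 0), Fin (conjL lam ↑i + 1)) := fun μ i =>
    ⟨conjL μ.1 ↑i, Nat.lt_succ_of_le (hμc μ ↑i)⟩
  have hextA : ∀ μ : {μ : List ℕ // IsPtn μ ∧ (∀ i, ν.getD i 0 ≤ μ.getD i 0) ∧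
      (∀ i, μ.getD i 0 ≤ lam.getD i 0)}, extA (toA μ) = conjL μ.1 := by
    intro μ
    funext k
    unfold extA
    by_cases h : k < lam.getD 0 0
    · rw [dif_pos h]
    · rw [dif_neg h]
      exact (hμN μ k (by omega)).symm
  have hcond : ∀ μ : {μ : List ℕ // IsPtn μ ∧ (∀ i, ν.getD i 0 ≤ μ.getD i 0) ∧
      (∀ i, μ.getD i 0 ≤ lam.getD i 0)}, ((∀ i, extA (toA μ) (i+1) ≤ extA (toA μ) i)
      ∧ (∀ i, conjL ν i ≤ extA (toA μ) i)) := by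
    intro μ
    rw [hextA]
    exact ⟨conjL_anti μ.2.1, hbμ μ⟩
  let fromA : (∀ i : Fin (lam.getD 0 0), Fin (conjL lam ↑i + 1)) →
      {μ : List ℕ // IsPtn μ ∧ (∀ i, ν.getD i 0 ≤ μ.getD i 0) ∧
        (∀ i, μ.getD i 0 ≤ lam.getD i 0)} := fun a =>
    if h : ((∀ i, extA a (i+1) ≤ extA a i) ∧ (∀ i, conjL ν i ≤ extA a i)) then
      ⟨unconjL (lam.getD 0 0) (extA a), by
        have hA0 : ∀ i, lam.getD 0 0 ≤ i → extA a i = 0 := fun i hi => by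
          unfold extA; rw [dif_neg (by omega)]
        have hUptn := unconjL_isPtn h.1 hA0
        have hconjU := conjL_unconjL h.1 hA0
        refine ⟨hUptn, ?_, ?_⟩
        · exact (dominance_iff hν hUptn).mpr (fun i => by rw [hconjU]; exact h.2 i)
        · exact (dominance_iff hUptn hlam).mpr (fun i => by
            rw [hconjU]; exact extA_le a i)⟩
    else ⟨ν, hν, fun i => le_refl _, hsub⟩
  have key := Finset.sum_nbij' (s := (Finset.univ : Finset {μ : List ℕ // IsPtn μ ∧
      (∀ i, ν.getD i 0 ≤ μ.getD i 0) ∧ (∀ i, μ.getD i 0 ≤ lam.getD i 0)}))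
    (t := (Finset.univ.filter (fun a : (∀ i : Fin (lam.getD 0 0), Fin (conjL lam ↑i + 1)) =>
      (∀ i, extA a (i+1) ≤ extA a i) ∧ (∀ i, conjL ν i ≤ extA a i))))
    (f := fun μ : {μ : List ℕ // IsPtn μ ∧ (∀ i, ν.getD i 0 ≤ μ.getD i 0) ∧
      (∀ i, μ.getD i 0 ≤ lam.getD i 0)} => ((-1 : Polynomial ℤ) ^ (lam.sum - μ.1.sum)) *
        fPieriP (lam.getD 0 0) μ.1 ν * gPieriP (lam.getD 0 0) lam μ.1)
    (g := fun a => Fterm (lam.getD 0 0) (conjL ν) (conjL lam) (extA a))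
    toA fromA
    (fun μ _ => Finset.mem_filter.mpr ⟨Finset.mem_univ _, hcond μ⟩)
    (fun a _ => Finset.mem_univ _)
    (by
      -- left inverse
      intro μ _
      show fromA (toA μ) = μ
      simp only [fromA]
      rw [dif_pos (hcond μ)]
      apply Subtype.ext
      show unconjL (lam.getD 0 0) (extA (toA μ)) = μ.1
      rw [hextA μ]
      have h1 : ∀ i, conjL μ.1 (i+1) ≤ conjL μ.1 i := conjL_anti μ.2.1
      have h2 : ∀ i, lam.getD 0 0 ≤ i → conjL μ.1 i = 0 := hμN μ
      exact ptn_ext_conj (unconjL_isPtn h1 h2) μ.2.1 (conjL_unconjL h1 h2))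
    (by
      -- right inverse
      intro a ha
      have hcondA := (Finset.mem_filter.mp ha).2
      show toA (fromA a) = a
      simp only [fromA]
      rw [dif_pos hcondA]
      have hA0 : ∀ i, lam.getD 0 0 ≤ i → extA a i = 0 := fun i hi => by
        unfold extA; rw [dif_neg (by omega)]
      funext i
      apply Fin.ext
      show conjL (unconjL (lam.getD 0 0) (extA a)) ↑i = ↑(a i)
      rw [conjL_unconjL hcondA.1 hA0]
      unfold extA
      rw [dif_pos i.isLt])
    (by
      -- summands agree
      intro μ _
      show _ = Fterm (lam.getD 0 0) (conjL ν) (conjL lam) (extA (toA μ))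
      rw [hextA μ]
      have e1 : lam.sum = ∑ i ∈ Finset.range (lam.getD 0 0), conjL lam i :=
        sum_eq_sum_conjL hlam_bd
      have e2 : μ.1.sum = ∑ i ∈ Finset.range (lam.getD 0 0), conjL μ.1 i :=
        sum_eq_sum_conjL (hμbd μ)
      have e3 : (∑ i ∈ Finset.range (lam.getD 0 0), (conjL lam i - conjL μ.1 i))
          + ∑ i ∈ Finset.range (lam.getD 0 0), conjL μ.1 i
          = ∑ i ∈ Finset.range (lam.getD 0 0), conjL lam i := by
        rw [← Finset.sum_add_distrib]
        refine Finset.sum_congr rfl fun i _ => ?_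
        have := hμc μ i
        omega
      have hexp : lam.sum - μ.1.sum
          = ∑ i ∈ Finset.range (lam.getD 0 0), (conjL lam i - conjL μ.1 i) := by
        omega
      simp only [Fterm, fPieriP, gPieriP]
      rw [hexp])
  refine key.trans ?_
  refine Eq.trans (Finset.sum_filter _ _) ?_
  refine Eq.trans (coreSum (lam.getD 0 0) (conjL ν) (conjL lam) hcanti hcN hb_le_c hbN) ?_
  have hiff : (∀ i, conjL ν i = conjL lam i) ↔ lam = ν :=
    ⟨fun h => (ptn_ext_conj hν hlam h).symm, fun h i => by rw [h]⟩
  exact if_congr hiff rfl rfl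


end HKKOTY
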